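/- Maxima and welfare gap in the lower-bound family: Fix λ ∈ (0,1). For every ε ∈ [−1,1], the expected welfare W^ε of μ^ε satisfies max_{x ∈ (1/2, 3/4]} W^ε(x) = W^ε(3/4), max_{x ∈ [0, 1/2]} W^ε(x) = W^ε(1/4), max_{x ∈ (3/4, 1]} W^ε(x) = W^ε(1), and W^ε(1) − W^ε(1/4) = (λ·b/4)·ε. -/

import Mathlib

open Set MeasureTheory

/-- Demand function of a Borel probability measure `μ` on `[0,1]`:
`D_μ(x) = μ({v : v ≥ x})`. -/
noncomputable def Dem (μ : Measure ℝ) (x : ℝ) : ℝ := (μ {v | x ≤ v}).toReal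

/-- Expected social welfare: `W_μ(x) = x·D_μ(x) + λ·∫_x^1 D_μ(t) dt`. -/
noncomputable def EW (lam : ℝ) (μ : Measure ℝ) (x : ℝ) : ℝ :=
  x * Dem μ x + lam * ∫ t in x..1, Dem μ t

/-- `a(λ)` from the lower-bound construction. -/
noncomputable def aC (lam : ℝ) : ℝ :=
  (1 - lam) * (136 - 99 * lam) / (2 * (4 - 3 * lam) * (24 - 17 * lam))

/-- `b(λ)` from the lower-bound construction. -/
noncomputable def bC (lam : ℝ) : ℝ := (1 - lam) / (2 * (24 - 17 * lam))

/-- The measure `μ^ε` on `[0,1]` with atoms at `1/4, 1/2, 3/4, 1` of masses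
`a, (1+ε)b, (1−ε)b, 1−a−2b` respectively. -/
noncomputable def muEps (lam ε : ℝ) : Measure ℝ :=
  ENNReal.ofReal (aC lam) • Measure.dirac (1/4)
    + ENNReal.ofReal ((1 + ε) * bC lam) • Measure.dirac (1/2)
    + ENNReal.ofReal ((1 - ε) * bC lam) • Measure.dirac (3/4)
    + ENNReal.ofReal (1 - aC lam - 2 * bC lam) • Measure.dirac 1

lemma dem_eval (lam ε x : ℝ) (hA : 0 ≤ aC lam) (hB1 : 0 ≤ (1+ε) * bC lam)
    (hB2 : 0 ≤ (1-ε) * bC lam) (hC : 0 ≤ 1 - aC lam - 2 * bC lam) :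
    Dem (muEps lam ε) x =
      (if x ≤ 1/4 then aC lam else 0) + (if x ≤ 1/2 then (1+ε) * bC lam else 0)
      + (if x ≤ 3/4 then (1-ε) * bC lam else 0)
      + (if x ≤ 1 then 1 - aC lam - 2 * bC lam else 0) := by
  have hset : {v : ℝ | x ≤ v} = Ici x := rfl
  have hd : ∀ p : ℝ, (Measure.dirac p {v | x ≤ v}) = if x ≤ p then 1 else 0 := by
    intro p
    rw [hset, Measure.dirac_apply' _ measurableSet_Ici]
    by_cases h : x ≤ p <;> simp [Set.indicator, h]
  simp only [Dem, muEps, Measure.coe_add, Measure.coe_smul, Pi.add_apply, Pi.smul_apply,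
    smul_eq_mul, hd]
  split_ifs <;>
    simp [mul_one, mul_zero, add_zero, zero_add, ENNReal.toReal_add, ENNReal.add_ne_top,
      ENNReal.ofReal_ne_top, ENNReal.toReal_ofReal, hA, hB1, hB2, hC]

lemma step_intble (m p u v : ℝ) :
    IntervalIntegrable (fun t => if t ≤ p then m else 0) volume u v := by
  have : (fun t : ℝ => if t ≤ p then m else 0) = (Iic p).indicator (fun _ => m) := by
    funext t; by_cases h : t ≤ p <;> simp [Set.indicator, h]
  rw [this]
  apply MeasureTheory.IntegrableOn.intervalIntegrable
  apply MeasureTheory.IntegrableOn.indicator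
  · exact integrableOn_const (by simp) (by simp)
  · exact measurableSet_Iic

lemma step_int (m p x : ℝ) (hx : x ≤ 1) (hp : p ≤ 1) :
    ∫ t in x..1, (if t ≤ p then m else 0) = m * (p - min x p) := by
  rcases le_or_gt x p with h | h
  · rw [min_eq_left h]
    rw [← intervalIntegral.integral_add_adjacent_intervals (b := p)
      (step_intble m p x p) (step_intble m p p 1)]
    have h1 : ∫ t in x..p, (if t ≤ p then m else 0) = m * (p - x) := by
      rw [intervalIntegral.integral_congr (g := fun _ => m),
        intervalIntegral.integral_const, smul_eq_mul, mul_comm]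
      intro t ht
      rw [Set.uIcc_of_le h] at ht
      simp [ht.2]
    have h2 : ∫ t in p..1, (if t ≤ p then m else 0) = 0 := by
      rw [intervalIntegral.integral_congr_ae (g := fun _ => (0:ℝ)),
        intervalIntegral.integral_zero]
      filter_upwards with t ht
      rw [Set.uIoc_of_le hp] at ht
      simp [not_le.2 ht.1]
    rw [h1, h2, add_zero]
  · rw [min_eq_right h.le, sub_self, mul_zero]
    rw [intervalIntegral.integral_congr_ae (g := fun _ => (0:ℝ)),
      intervalIntegral.integral_zero]
    filter_upwards with t ht
    rw [Set.uIoc_of_le hx] at ht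
    simp [not_le.2 (h.trans ht.1)]

lemma EW_eval (lam ε x : ℝ) (hA : 0 ≤ aC lam) (hB1 : 0 ≤ (1+ε) * bC lam)
    (hB2 : 0 ≤ (1-ε) * bC lam) (hC : 0 ≤ 1 - aC lam - 2 * bC lam) (hx : x ≤ 1) :
    EW lam (muEps lam ε) x =
      x * ((if x ≤ 1/4 then aC lam else 0) + (if x ≤ 1/2 then (1+ε) * bC lam else 0)
        + (if x ≤ 3/4 then (1-ε) * bC lam else 0)
        + (if x ≤ 1 then 1 - aC lam - 2 * bC lam else 0))
      + lam * (aC lam * (1/4 - min x (1/4)) + (1+ε) * bC lam * (1/2 - min x (1/2))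
        + (1-ε) * bC lam * (3/4 - min x (3/4))
        + (1 - aC lam - 2 * bC lam) * (1 - min x 1)) := by
  have hcongr : ∫ t in x..1, Dem (muEps lam ε) t =
      ∫ t in x..1, ((if t ≤ 1/4 then aC lam else 0) + (if t ≤ 1/2 then (1+ε) * bC lam else 0)
        + (if t ≤ 3/4 then (1-ε) * bC lam else 0)
        + (if t ≤ 1 then 1 - aC lam - 2 * bC lam else 0)) :=
    intervalIntegral.integral_congr (fun t _ => dem_eval lam ε t hA hB1 hB2 hC)
  rw [EW, dem_eval lam ε x hA hB1 hB2 hC, hcongr]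
  rw [intervalIntegral.integral_add (((step_intble _ _ _ _).add (step_intble _ _ _ _)).add
      (step_intble _ _ _ _)) (step_intble _ _ _ _),
    intervalIntegral.integral_add ((step_intble _ _ _ _).add (step_intble _ _ _ _))
      (step_intble _ _ _ _),
    intervalIntegral.integral_add (step_intble _ _ _ _) (step_intble _ _ _ _)]
  rw [step_int _ _ _ hx (by norm_num), step_int _ _ _ hx (by norm_num),
    step_int _ _ _ hx (by norm_num), step_int _ _ _ hx le_rfl]

set_option maxHeartbeats 1000000 in
theorem maxima_and_gap_lower_bound_family
    (lam : ℝ) (hlam : lam ∈ Ioo (0:ℝ) 1) (ε : ℝ) (hε : ε ∈ Icc (-1:ℝ) 1) :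
    (⨆ x : Ioc (1/2 : ℝ) (3/4), EW lam (muEps lam ε) x.1)
        = EW lam (muEps lam ε) (3/4) ∧
    (⨆ x : Icc (0:ℝ) (1/2), EW lam (muEps lam ε) x.1)
        = EW lam (muEps lam ε) (1/4) ∧
    (⨆ x : Ioc (3/4 : ℝ) 1, EW lam (muEps lam ε) x.1)
        = EW lam (muEps lam ε) 1 ∧
    EW lam (muEps lam ε) 1 - EW lam (muEps lam ε) (1/4) = lam * bC lam / 4 * ε := by
  obtain ⟨hl0, hl1⟩ := hlam
  obtain ⟨he1, he2⟩ := hε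
  have hd1 : (0:ℝ) < 4 - 3 * lam := by linarith
  have hd2 : (0:ℝ) < 24 - 17 * lam := by linarith
  have h1l : (0:ℝ) < 1 - lam := by linarith
  have hB : 0 ≤ bC lam := by rw [bC]; positivity
  have hA : 0 ≤ aC lam := by
    rw [aC]
    have : (0:ℝ) < 136 - 99 * lam := by linarith
    positivity
  have hB1 : 0 ≤ (1+ε) * bC lam := mul_nonneg (by linarith) hB
  have hB2 : 0 ≤ (1-ε) * bC lam := mul_nonneg (by linarith) hB
  have hC : 0 ≤ 1 - aC lam - 2 * bC lam := by
    have hs : aC lam + 2 * bC lam =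
        ((1 - lam) * (136 - 99 * lam) + 2 * (1 - lam) * (4 - 3 * lam))
          / (2 * (4 - 3 * lam) * (24 - 17 * lam)) := by
      rw [aC, bC]; field_simp [hd1.ne', hd2.ne', (by linarith : (4:ℝ) - lam * 3 ≠ 0)]
    have hden : (0:ℝ) < 2 * (4 - 3 * lam) * (24 - 17 * lam) := by positivity
    have : aC lam + 2 * bC lam ≤ 1 := by
      rw [hs, div_le_one hden]; nlinarith [sq_nonneg lam, sq_nonneg (1 - lam)]
    linarith
  -- abbreviations for formulas in regions
  have E34 : ∀ x ∈ Ioc (1/2 : ℝ) (3/4), EW lam (muEps lam ε) x =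
      x * ((1-ε) * bC lam + (1 - aC lam - 2 * bC lam))
      + lam * ((1-ε) * bC lam * (3/4 - x) + (1 - aC lam - 2 * bC lam) * (1 - x)) := by
    intro x hx
    rw [EW_eval lam ε x hA hB1 hB2 hC (le_trans hx.2 (by norm_num)),
      if_neg (by linarith [hx.1] : ¬ x ≤ 1/4), if_neg (not_le.2 hx.1),
      if_pos hx.2, if_pos (le_trans hx.2 (by norm_num)),
      min_eq_right (by linarith [hx.1] : (1/4:ℝ) ≤ x),
      min_eq_right hx.1.le, min_eq_left hx.2, min_eq_left (le_trans hx.2 (by norm_num))]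
    ring
  have E0 : ∀ x ∈ Icc (0:ℝ) (1/4), EW lam (muEps lam ε) x =
      x * (aC lam + (1+ε) * bC lam + (1-ε) * bC lam + (1 - aC lam - 2 * bC lam))
      + lam * (aC lam * (1/4 - x) + (1+ε) * bC lam * (1/2 - x)
        + (1-ε) * bC lam * (3/4 - x) + (1 - aC lam - 2 * bC lam) * (1 - x)) := by
    intro x hx
    rw [EW_eval lam ε x hA hB1 hB2 hC (by linarith [hx.2]),
      if_pos hx.2, if_pos (by linarith [hx.2] : x ≤ 1/2),
      if_pos (by linarith [hx.2] : x ≤ 3/4), if_pos (by linarith [hx.2] : x ≤ 1),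
      min_eq_left hx.2, min_eq_left (by linarith [hx.2] : x ≤ 1/2),
      min_eq_left (by linarith [hx.2] : x ≤ 3/4), min_eq_left (by linarith [hx.2] : x ≤ 1)]
  have E14 : ∀ x ∈ Ioc (1/4:ℝ) (1/2), EW lam (muEps lam ε) x =
      x * ((1+ε) * bC lam + (1-ε) * bC lam + (1 - aC lam - 2 * bC lam))
      + lam * ((1+ε) * bC lam * (1/2 - x)
        + (1-ε) * bC lam * (3/4 - x) + (1 - aC lam - 2 * bC lam) * (1 - x)) := by
    intro x hx
    rw [EW_eval lam ε x hA hB1 hB2 hC (by linarith [hx.2]),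
      if_neg (not_le.2 hx.1), if_pos hx.2,
      if_pos (by linarith [hx.2] : x ≤ 3/4), if_pos (by linarith [hx.2] : x ≤ 1),
      min_eq_right hx.1.le, min_eq_left hx.2,
      min_eq_left (by linarith [hx.2] : x ≤ 3/4), min_eq_left (by linarith [hx.2] : x ≤ 1)]
    ring
  have E1 : ∀ x ∈ Ioc (3/4:ℝ) 1, EW lam (muEps lam ε) x =
      x * (1 - aC lam - 2 * bC lam)
      + lam * ((1 - aC lam - 2 * bC lam) * (1 - x)) := by
    intro x hx
    rw [EW_eval lam ε x hA hB1 hB2 hC hx.2,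
      if_neg (by linarith [hx.1] : ¬ x ≤ 1/4), if_neg (by linarith [hx.1] : ¬ x ≤ 1/2),
      if_neg (not_le.2 hx.1), if_pos hx.2,
      min_eq_right (by linarith [hx.1] : (1/4:ℝ) ≤ x),
      min_eq_right (by linarith [hx.1] : (1/2:ℝ) ≤ x),
      min_eq_right hx.1.le, min_eq_left hx.2]
    ring
  have v34 := E34 (3/4) (by norm_num)
  have v14 := E0 (1/4) (by norm_num)
  have v12 := E14 (1/2) (by norm_num)
  have v1 := E1 1 (by norm_num)
  -- key inequality : EW(1/2) ≤ EW(1/4)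
  have hkey : EW lam (muEps lam ε) (1/2) ≤ EW lam (muEps lam ε) (1/4) := by
    have h : EW lam (muEps lam ε) (1/4) - EW lam (muEps lam ε) (1/2)
        = (aC lam * (2 - lam) - (1 - lam)) / 4 := by rw [v14, v12]; ring
    have h2 : 1 - lam ≤ aC lam * (2 - lam) := by
      rw [aC, div_mul_eq_mul_div, le_div_iff₀ (by positivity)]
      nlinarith [mul_nonneg h1l.le (by nlinarith : (0:ℝ) ≤ 80 - 54 * lam - 3 * lam ^ 2)]
    linarith
  -- region bounds
  have bnd1 : ∀ x ∈ Ioc (1/2:ℝ) (3/4), EW lam (muEps lam ε) x ≤ EW lam (muEps lam ε) (3/4) := by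
    intro x hx
    have h : EW lam (muEps lam ε) (3/4) - EW lam (muEps lam ε) x
        = (3/4 - x) * ((1 - lam) * ((1-ε) * bC lam + (1 - aC lam - 2 * bC lam))) := by
      rw [v34, E34 x hx]; ring
    nlinarith [mul_nonneg (by linarith [hx.2] : (0:ℝ) ≤ 3/4 - x)
      (mul_nonneg h1l.le (add_nonneg hB2 hC))]
  have bnd2 : ∀ x ∈ Icc (0:ℝ) (1/2), EW lam (muEps lam ε) x ≤ EW lam (muEps lam ε) (1/4) := by
    intro x hx
    rcases le_or_gt x (1/4) with h | h
    · have hd : EW lam (muEps lam ε) (1/4) - EW lam (muEps lam ε) x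
          = (1/4 - x) * (1 - lam) := by rw [v14, E0 x ⟨hx.1, h⟩]; ring
      nlinarith [mul_nonneg (by linarith : (0:ℝ) ≤ 1/4 - x) h1l.le]
    · have hd : EW lam (muEps lam ε) (1/2) - EW lam (muEps lam ε) x
          = (1/2 - x) * ((1 - lam) * ((1+ε) * bC lam + (1-ε) * bC lam
            + (1 - aC lam - 2 * bC lam))) := by
        rw [v12, E14 x ⟨h, hx.2⟩]; ring
      nlinarith [mul_nonneg (by linarith [hx.2] : (0:ℝ) ≤ 1/2 - x)
        (mul_nonneg h1l.le (add_nonneg (add_nonneg hB1 hB2) hC))]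
  have bnd3 : ∀ x ∈ Ioc (3/4:ℝ) 1, EW lam (muEps lam ε) x ≤ EW lam (muEps lam ε) 1 := by
    intro x hx
    have h : EW lam (muEps lam ε) 1 - EW lam (muEps lam ε) x
        = (1 - x) * ((1 - lam) * (1 - aC lam - 2 * bC lam)) := by
      rw [v1, E1 x hx]; ring
    nlinarith [mul_nonneg (by linarith [hx.2] : (0:ℝ) ≤ 1 - x) (mul_nonneg h1l.le hC)]
  refine ⟨?_, ?_, ?_, ?_⟩
  · haveI : Nonempty (Ioc (1/2:ℝ) (3/4)) := ⟨⟨3/4, by norm_num⟩⟩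
    apply le_antisymm
    · exact ciSup_le fun x => bnd1 x.1 x.2
    · exact le_ciSup (f := fun x : Ioc (1/2:ℝ) (3/4) => EW lam (muEps lam ε) x.1)
        ⟨EW lam (muEps lam ε) (3/4), by rintro _ ⟨x, rfl⟩; exact bnd1 x.1 x.2⟩
        ⟨3/4, by norm_num⟩
  · haveI : Nonempty (Icc (0:ℝ) (1/2)) := ⟨⟨1/4, by norm_num⟩⟩
    apply le_antisymm
    · exact ciSup_le fun x => bnd2 x.1 x.2
    · exact le_ciSup (f := fun x : Icc (0:ℝ) (1/2) => EW lam (muEps lam ε) x.1)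
        ⟨EW lam (muEps lam ε) (1/4), by rintro _ ⟨x, rfl⟩; exact bnd2 x.1 x.2⟩
        ⟨1/4, by norm_num⟩
  · haveI : Nonempty (Ioc (3/4:ℝ) 1) := ⟨⟨1, by norm_num⟩⟩
    apply le_antisymm
    · exact ciSup_le fun x => bnd3 x.1 x.2
    · exact le_ciSup (f := fun x : Ioc (3/4:ℝ) 1 => EW lam (muEps lam ε) x.1)
        ⟨EW lam (muEps lam ε) 1, by rintro _ ⟨x, rfl⟩; exact bnd3 x.1 x.2⟩
        ⟨1, by norm_num⟩
  · rw [v1, v14, aC, bC]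
    field_simp [hd1.ne', hd2.ne', (by linarith : (4:ℝ) - lam * 3 ≠ 0), (by linarith : (24:ℝ) - lam * 17 ≠ 0)]
    ring
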